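/- Let c_1, …, c_m ∈ ℝ^d and r_1, …, r_m ≥ 0, set p_i = (r_i, c_i) ∈ ℝ × ℝ^d, and let x* = (x_0*, x̄*) be the optimal solution of Inf_Q({p_1, …, p_m}). If x_0* ≤ 0, then the closed ball B(x̄*, −x_0*) intersects the closed ball B(c_i, r_i) for every i, and every closed ball B(c, ρ) with c ∈ ℝ^d and ρ ≥ 0 that intersects all the balls B(c_i, r_i) satisfies ρ ≥ −x_0*; that is, B(x̄*, −x_0*) is a smallest ball intersecting all the balls B(c_i, r_i). -/

import Mathlib

/-- Two closed balls with nonneg radii and centers within the sum of radii intersect. -/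
lemma balls_inter {E : Type*} [NormedAddCommGroup E] [NormedSpace ℝ E]
    (a b : E) (ra rb : ℝ) (hra : 0 ≤ ra) (hrb : 0 ≤ rb)
    (h : dist a b ≤ ra + rb) :
    (Metric.closedBall a ra ∩ Metric.closedBall b rb).Nonempty := by
  by_cases hle : dist a b ≤ ra
  · exact ⟨b, Metric.mem_closedBall'.2 hle, Metric.mem_closedBall_self hrb⟩
  · push_neg at hle
    have hpos : 0 < dist a b := lt_of_le_of_lt hra hle
    set t : ℝ := ra / dist a b with ht
    have ht0 : 0 ≤ t := div_nonneg hra hpos.le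
    refine ⟨a + t • (b - a), ?_, ?_⟩
    · simp only [Metric.mem_closedBall, dist_eq_norm]
      rw [add_sub_cancel_left, norm_smul, Real.norm_of_nonneg ht0]
      rw [ht, div_mul_eq_mul_div]
      rw [dist_eq_norm] at hpos ⊢
      rw [show ‖b - a‖ = ‖a - b‖ by rw [norm_sub_rev]]
      field_simp
      exact le_rfl
    · simp only [Metric.mem_closedBall, dist_eq_norm]
      have : a + t • (b - a) - b = (1 - t) • (a - b) := by
        rw [sub_smul, one_smul, smul_sub]; abel_nf; module
      rw [this, norm_smul]
      have ht1 : t ≤ 1 := by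
        rw [ht, div_le_one hpos]
        exact hle.le
      rw [Real.norm_of_nonneg (by linarith)]
      have hd : ‖a - b‖ = dist a b := (dist_eq_norm a b).symm
      rw [hd, ht]
      have : (1 - ra / dist a b) * dist a b = dist a b - ra := by
        field_simp
      rw [this]
      linarith

/-- If `x*` is the optimal solution of `Inf_Q({(r_i, c_i)})` and `x₀* ≤ 0`, then
`B(x̄*, -x₀*)` is a smallest closed ball intersecting all the balls `B(c_i, r_i)`. -/
theorem stmt_19 (d m : ℕ) (hd : 1 ≤ d) (hm : 1 ≤ m)
    (c : Fin m → EuclideanSpace ℝ (Fin d)) (r : Fin m → ℝ) (hr : ∀ i, 0 ≤ r i)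
    (x : ℝ × EuclideanSpace ℝ (Fin d))
    (hfeas : ∀ i, ‖c i - x.2‖ ≤ r i - x.1)
    (hopt : ∀ y : ℝ × EuclideanSpace ℝ (Fin d),
      (∀ i, ‖c i - y.2‖ ≤ r i - y.1) → y.1 ≤ x.1)
    (hx0 : x.1 ≤ 0) :
    (∀ i, (Metric.closedBall x.2 (-x.1) ∩ Metric.closedBall (c i) (r i)).Nonempty) ∧
    ∀ (cc : EuclideanSpace ℝ (Fin d)) (ρ : ℝ), 0 ≤ ρ →
      (∀ i, (Metric.closedBall cc ρ ∩ Metric.closedBall (c i) (r i)).Nonempty) →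
      -x.1 ≤ ρ := by
  constructor
  · intro i
    apply balls_inter _ _ _ _ (by linarith) (hr i)
    have := hfeas i
    rw [dist_eq_norm, show x.2 - c i = -(c i - x.2) by abel, norm_neg]
    linarith
  · intro cc ρ hρ hint
    have hyfeas : ∀ i, ‖c i - cc‖ ≤ r i - (-ρ) := by
      intro i
      obtain ⟨z, hz1, hz2⟩ := hint i
      rw [Metric.mem_closedBall] at hz1 hz2
      calc ‖c i - cc‖ = dist (c i) cc := (dist_eq_norm _ _).symm
        _ ≤ dist (c i) z + dist z cc := dist_triangle _ _ _
        _ ≤ r i + ρ := by rw [dist_comm (c i) z]; linarith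
        _ = r i - (-ρ) := by ring
    have h := hopt (-ρ, cc) hyfeas
    simp only [] at h
    linarith
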